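/- Let m ≥ 2 be an integer and let s_2, …, s_m ∈ (0, ∞). If there exists a constant C > 0 such that sup_{1 ≤ j_1 ≤ n} ( Σ_{j_2=1}^n ( ⋯ ( Σ_{j_m=1}^n |T(e_{j_1}, …, e_{j_m})|^{s_m} )^{s_{m−1}/s_m} ⋯ )^{s_2/s_3} )^{1/s_2} ≤ C ‖T‖ for all positive integers n and all m-linear forms T : ℓ_m^n × ⋯ × ℓ_m^n → 𝕂, then s_2 ≥ m. -/

import Mathlib

open scoped ENNReal

/-- The iterated mixed-norm expression
`( Σ_{j_1} ( ⋯ ( Σ_{j_m} f(j_1,…,j_m)^{s_m} )^{s_{m−1}/s_m} ⋯ )^{s_1/s_2} )^{1/s_1}`,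
defined recursively: for exponents `s : Fin m → ℝ` and `f : (Fin m → Fin n) → ℝ`. -/
noncomputable def mixedNorm (n : ℕ) : (m : ℕ) → (Fin m → ℝ) → ((Fin m → Fin n) → ℝ) → ℝ
  | 0, _, f => f Fin.elim0
  | (m + 1), s, f =>
      (∑ j : Fin n,
        (mixedNorm n m (fun i => s i.succ) (fun js => f (Fin.cons j js))) ^ (s 0)) ^ (1 / s 0)

section Aux
open Finset

lemma mixedNorm_succ (n M : ℕ) (s : Fin (M+1) → ℝ) (f : (Fin (M+1) → Fin n) → ℝ) :
    mixedNorm n (M+1) s f =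
      (∑ j : Fin n,
        (mixedNorm n M (fun i => s i.succ) (fun js => f (Fin.cons j js))) ^ (s 0)) ^ (1 / s 0) := by
  rw [mixedNorm]

lemma mixedNorm_zero (n : ℕ) : ∀ (M : ℕ) (s : Fin M → ℝ), (∀ i, 0 < s i) →
    mixedNorm n M s (fun _ => 0) = 0 := by
  intro M
  induction M with
  | zero => intro s hs; rfl
  | succ M ih =>
    intro s hs
    rw [mixedNorm_succ]
    rw [Finset.sum_congr rfl (fun j _ => by
      rw [ih (fun i => s i.succ) (fun i => hs i.succ), Real.zero_rpow (ne_of_gt (hs 0))])]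
    rw [Finset.sum_const, smul_zero, Real.zero_rpow]
    simp only [ne_eq, one_div, inv_eq_zero]
    exact ne_of_gt (hs 0)

lemma mixedNorm_pointMass (n : ℕ) : ∀ (M : ℕ) (j : Fin n) (s : Fin M → ℝ), (∀ i, 0 < s i) →
    mixedNorm n M s (fun js => if (∀ i, j = js i) then 1 else 0) = 1 := by
  intro M
  induction M with
  | zero =>
    intro j s hs
    show (if (∀ i : Fin 0, j = Fin.elim0 i) then (1:ℝ) else 0) = 1
    simp
  | succ M ih =>
    intro j s hs
    rw [mixedNorm_succ]
    have hinner : ∀ j' : Fin n,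
        mixedNorm n M (fun i => s i.succ)
          (fun js => if (∀ i, j = (Fin.cons j' js : Fin (M+1) → Fin n) i) then 1 else 0)
        = if j = j' then 1 else 0 := by
      intro j'
      by_cases hj : j = j'
      · subst hj
        rw [if_pos rfl]
        have hfun : (fun js : Fin M → Fin n => if (∀ i, j = (Fin.cons j js : Fin (M+1) → Fin n) i) then (1:ℝ) else 0)
            = (fun js => if (∀ i, j = js i) then 1 else 0) := by
          funext js
          congr 1
          simp only [eq_iff_iff]
          constructor
          · intro h i; have := h i.succ; rwa [Fin.cons_succ] at this
          · intro h i
            refine Fin.cases ?_ ?_ i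
            · rw [Fin.cons_zero]
            · intro i'; rw [Fin.cons_succ]; exact h i'
        rw [hfun, ih j (fun i => s i.succ) (fun i => hs i.succ)]
      · rw [if_neg hj]
        have hfun : (fun js : Fin M → Fin n => if (∀ i, j = (Fin.cons j' js : Fin (M+1) → Fin n) i) then (1:ℝ) else 0)
            = (fun _ => 0) := by
          funext js
          rw [if_neg]
          intro h
          exact hj (by have := h 0; rwa [Fin.cons_zero] at this)
        rw [hfun, mixedNorm_zero n M _ (fun i => hs i.succ)]
    rw [Finset.sum_congr rfl (fun j' _ => by rw [hinner j'])]
    have : ∀ j' : Fin n, ((if j = j' then (1:ℝ) else 0)) ^ (s 0) = if j = j' then 1 else 0 := by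
      intro j'
      split_ifs
      · exact Real.one_rpow _
      · exact Real.zero_rpow (ne_of_gt (hs 0))
    rw [Finset.sum_congr rfl (fun j' _ => this j'), Finset.sum_ite_eq univ j (fun _ => (1:ℝ)),
      if_pos (mem_univ j), Real.one_rpow]

lemma mixedNorm_diag (n M : ℕ) (s : Fin (M+1) → ℝ) (hs : ∀ i, 0 < s i) :
    mixedNorm n (M+1) s
      (fun js => if (∀ i, js 0 = js i) then 1 else 0) = (n:ℝ) ^ (1/(s 0)) := by
  rw [mixedNorm_succ]
  have hinner : ∀ j : Fin n,
      mixedNorm n M (fun i => s i.succ)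
        (fun js => if (∀ i, (Fin.cons j js : Fin (M+1) → Fin n) 0 = (Fin.cons j js : Fin (M+1) → Fin n) i) then 1 else 0) = 1 := by
    intro j
    have hfun : (fun js : Fin M → Fin n =>
        if (∀ i, (Fin.cons j js : Fin (M+1) → Fin n) 0 = (Fin.cons j js : Fin (M+1) → Fin n) i) then (1:ℝ) else 0)
        = (fun js => if (∀ i, j = js i) then 1 else 0) := by
      funext js
      congr 1
      simp only [Fin.cons_zero, eq_iff_iff]
      constructor
      · intro h i; have := h i.succ; rwa [Fin.cons_succ] at this
      · intro h i
        refine Fin.cases ?_ ?_ i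
        · rw [Fin.cons_zero]
        · intro i'; rw [Fin.cons_succ]; exact h i'
    rw [hfun, mixedNorm_pointMass n M j (fun i => s i.succ) (fun i => hs i.succ)]
  rw [Finset.sum_congr rfl (fun j _ => by rw [hinner j, Real.one_rpow])]
  rw [Finset.sum_const, card_univ, Fintype.card_fin, nsmul_eq_mul, mul_one]


lemma holder_prod {M n : ℕ} (a : Fin (M+1) → Fin n → ℝ) (ha : ∀ k j, 0 ≤ a k j) :
    ∑ j : Fin n, ∏ k, a k j ≤
      (n : ℝ) ^ (1/(M+2:ℝ)) * ∏ k, (∑ j, a k j ^ (M+2:ℝ)) ^ (1/(M+2:ℝ)) := by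
  have hM1 : (0:ℝ) < (M+1:ℝ) := by positivity
  have hp1 : (1:ℝ) < (M+2:ℝ) := by have : (0:ℝ) ≤ M := Nat.cast_nonneg M; linarith
  have hp0 : (0:ℝ) < (M+2:ℝ) := by positivity
  set N : Fin (M+1) → ℝ := fun k => (∑ j, a k j ^ (M+2:ℝ)) ^ (1/(M+2:ℝ)) with hN
  have hsum_nonneg : ∀ k, 0 ≤ ∑ j, a k j ^ (M+2:ℝ) :=
    fun k => Finset.sum_nonneg fun j _ => Real.rpow_nonneg (ha k j) _
  have hNnonneg : ∀ k, 0 ≤ N k := fun k => Real.rpow_nonneg (hsum_nonneg k) _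
  by_cases hzero : ∃ k, N k = 0
  · obtain ⟨k0, hk0⟩ := hzero
    have hsum0 : ∑ j, a k0 j ^ (M+2:ℝ) = 0 := by
      by_contra hne
      have : (0:ℝ) < ∑ j, a k0 j ^ (M+2:ℝ) := lt_of_le_of_ne (hsum_nonneg k0) (Ne.symm hne)
      exact absurd hk0 (ne_of_gt (Real.rpow_pos_of_pos this _))
    have hA : ∀ j, a k0 j = 0 := by
      intro j
      have h0 : a k0 j ^ (M+2:ℝ) = 0 := by
        have := (Finset.sum_eq_zero_iff_of_nonneg
          (fun j _ => Real.rpow_nonneg (ha k0 j) _)).mp hsum0 j (mem_univ j)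
        exact this
      have := Real.rpow_eq_zero_iff_of_nonneg (ha k0 j) |>.mp h0
      exact this.1
    have : ∑ j : Fin n, ∏ k, a k j = 0 := by
      apply Finset.sum_eq_zero
      intro j _
      exact Finset.prod_eq_zero (mem_univ k0) (hA j)
    rw [this]
    exact mul_nonneg (Real.rpow_nonneg (Nat.cast_nonneg n) _)
      (Finset.prod_nonneg fun k _ => hNnonneg k)
  · push_neg at hzero
    have hNpos : ∀ k, 0 < N k := fun k => lt_of_le_of_ne (hNnonneg k) (Ne.symm (hzero k))
    -- key2 : Hölder with p = M+2, q = (M+2)/(M+1)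
    have key2 : ∀ k, ∑ j, a k j ^ (M+1:ℝ) ≤ (n:ℝ) ^ (1/(M+2:ℝ)) * N k ^ (M+1:ℝ) := by
      intro k
      have hpq : (M+2:ℝ).HolderConjugate ((M+2:ℝ)/((M+2:ℝ)-1)) :=
        Real.HolderConjugate.conjExponent hp1
      have := Real.inner_le_Lp_mul_Lq (univ : Finset (Fin n))
        (fun _ => (1:ℝ)) (fun j => a k j ^ (M+1:ℝ)) hpq
      simp only [one_mul] at this
      have h1 : ∑ j : Fin n, |(1:ℝ)| ^ (M+2:ℝ) = (n:ℝ) := by simp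
      have h2 : ∀ j, |a k j ^ (M+1:ℝ)| ^ ((M+2:ℝ)/((M+2:ℝ)-1)) = a k j ^ (M+2:ℝ) := by
        intro j
        rw [abs_of_nonneg (Real.rpow_nonneg (ha k j) _), ← Real.rpow_mul (ha k j)]
        congr 1
        have : (M+2:ℝ) - 1 = (M+1:ℝ) := by ring
        rw [this]
        field_simp
      have h3 : (∑ j, |a k j ^ (M+1:ℝ)| ^ ((M+2:ℝ)/((M+2:ℝ)-1))) ^ (1/((M+2:ℝ)/((M+2:ℝ)-1)))
          = N k ^ (M+1:ℝ) := by
        rw [Finset.sum_congr rfl (fun j _ => h2 j)]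
        rw [hN, ← Real.rpow_mul (hsum_nonneg k)]
        congr 1
        have : (M+2:ℝ) - 1 = (M+1:ℝ) := by ring
        rw [this]
        field_simp
      rw [h1, h3] at this
      exact this
    -- key1 : AM-GM per j
    have key1 : ∀ j : Fin n, ∏ k, (a k j / N k) ≤
        ∑ k, (1/(M+1:ℝ)) * ((a k j / N k) ^ (M+1:ℝ)) := by
      intro j
      have := Real.geom_mean_le_arith_mean_weighted (univ : Finset (Fin (M+1)))
        (fun _ => 1/(M+1:ℝ)) (fun k => (a k j / N k) ^ (M+1:ℝ))
        (fun _ _ => by positivity)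
        (by simp [Finset.sum_const]; field_simp)
        (fun k _ => Real.rpow_nonneg (div_nonneg (ha k j) (hNnonneg k)) _)
      calc ∏ k, (a k j / N k)
          = ∏ k, ((a k j / N k) ^ (M+1:ℝ)) ^ (1/(M+1:ℝ)) := by
            apply Finset.prod_congr rfl
            intro k _
            rw [← Real.rpow_mul (div_nonneg (ha k j) (hNnonneg k)), mul_one_div, div_self (ne_of_gt hM1),
              Real.rpow_one]
        _ ≤ ∑ k, (1/(M+1:ℝ)) * ((a k j / N k) ^ (M+1:ℝ)) := this
    have main : ∑ j : Fin n, ∏ k, (a k j / N k) ≤ (n:ℝ) ^ (1/(M+2:ℝ)) := by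
      calc ∑ j : Fin n, ∏ k, (a k j / N k)
          ≤ ∑ j : Fin n, ∑ k, (1/(M+1:ℝ)) * ((a k j / N k) ^ (M+1:ℝ)) :=
            Finset.sum_le_sum fun j _ => key1 j
        _ = (1/(M+1:ℝ)) * ∑ k, (∑ j, a k j ^ (M+1:ℝ)) / N k ^ (M+1:ℝ) := by
            rw [Finset.sum_comm, Finset.mul_sum]
            apply Finset.sum_congr rfl
            intro k _
            rw [← Finset.mul_sum]
            congr 1
            rw [Finset.sum_div]
            apply Finset.sum_congr rfl
            intro j _
            rw [Real.div_rpow (ha k j) (hNnonneg k)]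
        _ ≤ (1/(M+1:ℝ)) * ∑ k : Fin (M+1), (n:ℝ) ^ (1/(M+2:ℝ)) := by
            apply mul_le_mul_of_nonneg_left _ (by positivity)
            apply Finset.sum_le_sum
            intro k _
            rw [div_le_iff₀ (Real.rpow_pos_of_pos (hNpos k) _)]
            exact key2 k
        _ = (n:ℝ) ^ (1/(M+2:ℝ)) := by
            rw [Finset.sum_const, card_univ, Fintype.card_fin, nsmul_eq_mul]
            push_cast
            field_simp
    have expand : ∑ j : Fin n, ∏ k, (a k j / N k)
        = (∑ j : Fin n, ∏ k, a k j) / ∏ k, N k := by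
      rw [Finset.sum_div]
      apply Finset.sum_congr rfl
      intro j _
      rw [Finset.prod_div_distrib]
    have hProdN : 0 < ∏ k, N k := Finset.prod_pos fun k _ => hNpos k
    rw [expand, div_le_iff₀ hProdN] at main
    calc ∑ j : Fin n, ∏ k, a k j ≤ (n:ℝ) ^ (1/(M+2:ℝ)) * ∏ k, N k := main
      _ = _ := rfl


noncomputable def diagML (𝕂 : Type*) [RCLike 𝕂] (m n : ℕ) (c : Fin m → Fin n → Fin n) :
    MultilinearMap 𝕂 (fun _ : Fin m => PiLp (m : ℝ≥0∞) (fun _ : Fin n => 𝕂)) 𝕂 :=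
  ∑ j : Fin n, (MultilinearMap.mkPiAlgebra 𝕂 (Fin m) 𝕂).compLinearMap
    (fun k => (LinearMap.proj (c k j)).comp
      (WithLp.linearEquiv (m : ℝ≥0∞) 𝕂 (Fin n → 𝕂)).toLinearMap)

lemma diagML_apply (𝕂 : Type*) [RCLike 𝕂] (m n : ℕ) (c : Fin m → Fin n → Fin n)
    (x : (i : Fin m) → PiLp (m : ℝ≥0∞) (fun _ : Fin n => 𝕂)) :
    diagML 𝕂 m n c x = ∑ j : Fin n, ∏ k, x k (c k j) := by
  simp [diagML, MultilinearMap.sum_apply]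

lemma pilp_coord_le {n m : ℕ} (hm : 2 ≤ m) [Fact ((1:ℝ≥0∞) ≤ (m : ℝ≥0∞))]
    {𝕂 : Type*} [RCLike 𝕂] (x : PiLp (m : ℝ≥0∞) (fun _ : Fin n => 𝕂)) (i : Fin n) :
    ‖x i‖ ≤ ‖x‖ := by
  have hmr : ((m : ℝ≥0∞)).toReal = (m : ℝ) := by simp
  have hm0 : (0:ℝ) < (m:ℝ) := by positivity
  rw [PiLp.norm_eq_sum (by rw [hmr]; exact hm0), hmr]
  have h1 : ‖x i‖ = (‖x i‖ ^ (m:ℝ)) ^ (1/(m:ℝ)) := by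
    rw [← Real.rpow_mul (norm_nonneg _), mul_one_div, div_self (ne_of_gt hm0), Real.rpow_one]
  rw [h1]
  apply Real.rpow_le_rpow (Real.rpow_nonneg (norm_nonneg _) _)
  · exact Finset.single_le_sum (f := fun i => ‖x i‖ ^ (m:ℝ))
      (fun j _ => Real.rpow_nonneg (norm_nonneg _) _) (Finset.mem_univ i)
  · positivity

lemma diagML_norm_bound {M n : ℕ} (hn : 0 < n) [Fact ((1:ℝ≥0∞) ≤ ((M+2 : ℕ) : ℝ≥0∞))]
    (𝕂 : Type*) [RCLike 𝕂]
    (x : (i : Fin (M+2)) → PiLp ((M+2 : ℕ) : ℝ≥0∞) (fun _ : Fin n => 𝕂)) :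
    ‖diagML 𝕂 (M+2) n (fun k j => if (k:ℕ) = 0 then ⟨0, hn⟩ else j) x‖ ≤
      (n:ℝ) ^ (1/(M+2:ℝ)) * ∏ i, ‖x i‖ := by
  rw [diagML_apply]
  set c : Fin (M+2) → Fin n → Fin n := fun k j => if (k:ℕ) = 0 then ⟨0, hn⟩ else j with hc
  calc ‖∑ j : Fin n, ∏ k, x k (c k j)‖
      ≤ ∑ j : Fin n, ‖∏ k, x k (c k j)‖ := norm_sum_le _ _
    _ = ∑ j : Fin n, ∏ k, ‖x k (c k j)‖ := by
        apply Finset.sum_congr rfl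
        intro j _
        exact norm_prod _ _
    _ = ∑ j : Fin n, ‖x 0 ⟨0, hn⟩‖ * ∏ k : Fin (M+1), ‖x k.succ j‖ := by
        apply Finset.sum_congr rfl
        intro j _
        have h0 : c 0 j = ⟨0, hn⟩ := rfl
        have hsu : ∀ k : Fin (M+1), c k.succ j = j := fun k => rfl
        rw [Fin.prod_univ_succ, h0]
        exact congrArg _ (Finset.prod_congr rfl fun k _ => by rw [hsu])
    _ = ‖x 0 ⟨0, hn⟩‖ * ∑ j : Fin n, ∏ k : Fin (M+1), ‖x k.succ j‖ := by
        rw [Finset.mul_sum]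
    _ ≤ ‖x 0‖ * ((n:ℝ) ^ (1/(M+2:ℝ)) * ∏ k : Fin (M+1),
          (∑ j, ‖x k.succ j‖ ^ (M+2:ℝ)) ^ (1/(M+2:ℝ))) := by
        apply mul_le_mul
        · exact pilp_coord_le (by omega) (x 0) ⟨0, hn⟩
        · exact holder_prod (fun k j => ‖x k.succ j‖) (fun k j => norm_nonneg _)
        · exact Finset.sum_nonneg fun j _ => Finset.prod_nonneg fun k _ => norm_nonneg _
        · exact norm_nonneg _
    _ = (n:ℝ) ^ (1/(M+2:ℝ)) * ∏ i, ‖x i‖ := by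
        have hnorm : ∀ k : Fin (M+1),
            (∑ j, ‖x k.succ j‖ ^ (M+2:ℝ)) ^ (1/(M+2:ℝ)) = ‖x k.succ‖ := by
          intro k
          have ht : (((M+2:ℕ) : ℝ≥0∞)).toReal = ((M:ℝ)+2) := by
            rw [ENNReal.toReal_natCast]; push_cast; ring
          rw [PiLp.norm_eq_sum (p := ((M+2:ℕ):ℝ≥0∞)) (by rw [ht]; positivity), ht]
        rw [Finset.prod_congr rfl (fun k _ => hnorm k)]
        conv_rhs => rw [Fin.prod_univ_succ]
        ring


open Finset
open scoped ENNReal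

end Aux

section Main
open Finset

/-- **Optimality: `s₂ ≥ m`.**
If for exponents `s_2, …, s_m ∈ (0,∞)` (here `s ⟨k-2,_⟩ = s_k`) there is `C > 0` with
`sup_{j_1} ( Σ_{j_2} ( ⋯ ( Σ_{j_m} |T(e_{j_1},…,e_{j_m})|^{s_m} )^{s_{m−1}/s_m} ⋯ )^{s_2/s_3} )^{1/s_2}
≤ C‖T‖` for all `n` and all `m`-linear forms `T : ℓ_m^n × ⋯ × ℓ_m^n → 𝕂`, then `s_2 ≥ m`. -/
theorem exponent_s2_ge_m (𝕂 : Type*) [RCLike 𝕂] (m : ℕ) (hm : 2 ≤ m)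
    (s : Fin (m - 1) → ℝ) (hs : ∀ i, 0 < s i) :
    haveI : Fact ((1 : ℝ≥0∞) ≤ (m : ℝ≥0∞)) := ⟨by exact_mod_cast (by omega : 1 ≤ m)⟩
    (∃ C : ℝ, 0 < C ∧ ∀ n : ℕ, 0 < n →
        ∀ T : ContinuousMultilinearMap 𝕂
            (fun _ : Fin m => PiLp (m : ℝ≥0∞) (fun _ : Fin n => 𝕂)) 𝕂,
          ⨆ j1 : Fin n,
            mixedNorm n (m - 1) s
              (fun js => ‖T (fun i : Fin m =>
                (WithLp.equiv (m : ℝ≥0∞) (Fin n → 𝕂)).symm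
                  (Pi.single (if (i : ℕ) = 0 then j1
                    else js ⟨(i : ℕ) - 1, by have := i.isLt; omega⟩) 1))‖)
            ≤ C * ‖T‖) →
      (m : ℝ) ≤ s ⟨0, by omega⟩ := by
  intro hyp
  obtain ⟨M, rfl⟩ : ∃ M, m = M + 2 := ⟨m - 2, by omega⟩
  haveI : Fact ((1 : ℝ≥0∞) ≤ ((M + 2 : ℕ) : ℝ≥0∞)) :=
    ⟨by exact_mod_cast (by omega : 1 ≤ M + 2)⟩
  obtain ⟨C, hC, H⟩ := hyp
  by_contra hcon
  push_neg at hcon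
  have hσcon : s (0 : Fin (M+1)) < ((M + 2 : ℕ) : ℝ) := hcon
  have hσpos : 0 < s (0 : Fin (M+1)) := hs _
  have hM2 : (0:ℝ) < (M:ℝ) + 2 := by positivity
  have hσlt : s (0 : Fin (M+1)) < (M:ℝ) + 2 := by push_cast at hσcon; linarith
  have hε : 0 < 1/(s (0 : Fin (M+1))) - 1/((M:ℝ)+2) := by
    have := one_div_lt_one_div_of_lt hσpos hσlt
    linarith
  set ε : ℝ := 1/(s (0 : Fin (M+1))) - 1/((M:ℝ)+2) with hεdef
  set n : ℕ := ⌈C ^ (1/ε)⌉₊ + 1 with hndef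
  have hn : 0 < n := Nat.succ_pos _
  set T : ContinuousMultilinearMap 𝕂
      (fun _ : Fin (M+2) => PiLp ((M+2 : ℕ) : ℝ≥0∞) (fun _ : Fin n => 𝕂)) 𝕂 :=
    (diagML 𝕂 (M+2) n (fun k j => if (k:ℕ) = 0 then ⟨0, hn⟩ else j)).mkContinuous
      ((n:ℝ) ^ (1/((M:ℝ)+2))) (diagML_norm_bound hn 𝕂) with hT
  have hTnorm : ‖T‖ ≤ (n:ℝ) ^ (1/((M:ℝ)+2)) :=
    MultilinearMap.mkContinuous_norm_le _ (by positivity) _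
  have hH := H n hn T
  -- coefficient computation
  have hcoeff : ∀ js : Fin (M+1) → Fin n,
      ‖T (fun i : Fin (M+2) =>
        (WithLp.equiv ((M+2 : ℕ) : ℝ≥0∞) (Fin n → 𝕂)).symm
          (Pi.single (if (i : ℕ) = 0 then (⟨0, hn⟩ : Fin n)
            else js ⟨(i : ℕ) - 1, by have := i.isLt; omega⟩) 1))‖
      = if (∀ i : Fin (M+1), js 0 = js i) then 1 else 0 := by
    intro js
    have happ : T (fun i : Fin (M+2) =>
        (WithLp.equiv ((M+2 : ℕ) : ℝ≥0∞) (Fin n → 𝕂)).symm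
          (Pi.single (if (i : ℕ) = 0 then (⟨0, hn⟩ : Fin n)
            else js ⟨(i : ℕ) - 1, by have := i.isLt; omega⟩) 1))
        = ∑ j : Fin n, if (∀ i : Fin (M+1), j = js i) then (1:𝕂) else 0 := by
      rw [hT]
      rw [show ⇑((diagML 𝕂 (M+2) n (fun k j => if (k:ℕ) = 0 then ⟨0, hn⟩ else j)).mkContinuous
          ((n:ℝ) ^ (1/((M:ℝ)+2))) (diagML_norm_bound hn 𝕂))
        = ⇑(diagML 𝕂 (M+2) n (fun k j => if (k:ℕ) = 0 then ⟨0, hn⟩ else j)) from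
          MultilinearMap.coe_mkContinuous _ _ _]
      rw [diagML_apply]
      apply Finset.sum_congr rfl
      intro j _
      simp only [WithLp.equiv_symm_apply, PiLp.toLp_apply, Pi.single_apply]
      simp only [Finset.prod_boole]
      have hPQ : (∀ k ∈ (univ : Finset (Fin (M+2))),
          (if (k:ℕ) = 0 then (⟨0, hn⟩ : Fin n) else j)
            = (if (k:ℕ) = 0 then (⟨0, hn⟩ : Fin n)
                else js ⟨(k:ℕ) - 1, by have := k.isLt; omega⟩))
          ↔ (∀ i : Fin (M+1), j = js i) := by
        constructor
        · intro h i
          have := h i.succ (mem_univ _)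
          simp only [Fin.val_succ, Nat.add_sub_cancel, Fin.eta] at this
          rw [if_neg (Nat.succ_ne_zero _)] at this
          rwa [if_neg (Nat.succ_ne_zero _)] at this
        · intro h k _
          refine Fin.cases ?_ ?_ k
          · simp
          · intro i
            simp only [Fin.val_succ, Nat.add_sub_cancel, Fin.eta]
            rw [if_neg (Nat.succ_ne_zero _), if_neg (Nat.succ_ne_zero _)]
            exact h i
      simp only [hPQ]
    rw [happ]
    by_cases hQ : ∀ i : Fin (M+1), js 0 = js i
    · rw [if_pos hQ]
      have hiff : ∀ j : Fin n, (∀ i : Fin (M+1), j = js i) ↔ j = js 0 := by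
        intro j
        constructor
        · intro h; exact h 0
        · intro h i; rw [h]; exact hQ i
      rw [Finset.sum_congr rfl (fun j _ => if_congr (hiff j) rfl rfl)]
      rw [Finset.sum_ite_eq' univ (js 0) (fun _ => (1:𝕂)), if_pos (mem_univ _)]
      exact norm_one
    · rw [if_neg hQ]
      have hall : ∀ j : Fin n, ¬(∀ i : Fin (M+1), j = js i) := by
        intro j h
        exact hQ (fun i => by rw [← h 0, ← h i])
      rw [Finset.sum_congr rfl (fun j _ => if_neg (hall j)), Finset.sum_const, smul_zero]
      exact norm_zero
  -- the supremum is at least the value at j1 = 0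
  have hsup : mixedNorm n (M+1) s
      (fun js : Fin (M+1) → Fin n => ‖T (fun i : Fin (M+2) =>
        (WithLp.equiv ((M+2 : ℕ) : ℝ≥0∞) (Fin n → 𝕂)).symm
          (Pi.single (if (i : ℕ) = 0 then (⟨0, hn⟩ : Fin n)
            else js ⟨(i : ℕ) - 1, by have := i.isLt; omega⟩) 1))‖)
      ≤ C * ‖T‖ := by
    refine le_trans ?_ hH
    apply le_ciSup (f := fun j1 : Fin n =>
        mixedNorm n (M + 2 - 1) s fun js =>
          ‖T fun i : Fin (M+2) =>
            (WithLp.equiv ((M+2 : ℕ) : ℝ≥0∞) (Fin n → 𝕂)).symm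
              (Pi.single (if (i : ℕ) = 0 then j1
                else js ⟨(i : ℕ) - 1, by have := i.isLt; omega⟩) 1)‖)
      (Set.Finite.bddAbove (Set.finite_range _)) (⟨0, hn⟩ : Fin n)
  rw [show (fun js : Fin (M+1) → Fin n => ‖T (fun i : Fin (M+2) =>
        (WithLp.equiv ((M+2 : ℕ) : ℝ≥0∞) (Fin n → 𝕂)).symm
          (Pi.single (if (i : ℕ) = 0 then (⟨0, hn⟩ : Fin n)
            else js ⟨(i : ℕ) - 1, by have := i.isLt; omega⟩) 1))‖)
      = (fun js : Fin (M+1) → Fin n => if (∀ i : Fin (M+1), js 0 = js i) then (1:ℝ) else 0)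
      from funext hcoeff] at hsup
  rw [mixedNorm_diag n M s hs] at hsup
  -- final numeric contradiction
  have hnpos : (0:ℝ) < (n:ℝ) := by exact_mod_cast hn
  have key : (n:ℝ) ^ (1/(s (0 : Fin (M+1)))) ≤ C * (n:ℝ) ^ (1/((M:ℝ)+2)) :=
    le_trans hsup (mul_le_mul_of_nonneg_left hTnorm hC.le)
  have hle : (n:ℝ) ^ ε ≤ C := by
    rw [hεdef, Real.rpow_sub hnpos, div_le_iff₀ (Real.rpow_pos_of_pos hnpos _)]
    exact key
  have hgt : C < (n:ℝ) ^ ε := by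
    have hx : C ^ (1/ε) < (n:ℝ) := by
      have h1 : C ^ (1/ε) ≤ (⌈C ^ (1/ε)⌉₊ : ℝ) := Nat.le_ceil _
      have h2 : ((⌈C ^ (1/ε)⌉₊ : ℕ) : ℝ) < (n:ℝ) := by
        rw [hndef]; exact_mod_cast Nat.lt_succ_self _
      linarith
    calc C = (C ^ (1/ε)) ^ ε := by
          rw [← Real.rpow_mul hC.le, one_div, inv_mul_cancel₀ (ne_of_gt hε), Real.rpow_one]
      _ < (n:ℝ) ^ ε := Real.rpow_lt_rpow (Real.rpow_nonneg hC.le _) hx hε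
  exact absurd hle (not_le.mpr hgt)

end Main
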